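/- Let S, A be finite nonempty sets, β ∈ [0,1), γ a probability distribution on S, and p a transition kernel on S × A. Then the set Q^β(γ) = { x : S × A → ℝ : x ≥ 0 and ∑_{(s,a)} (δ(s,s') − β·p(s'|s,a))·x(s,a) = (1−β)·γ(s') for all s' } is a nonempty, compact, convex subset of ℝ^{S×A}, contained in the probability simplex on S × A. -/

import Mathlib

attribute [local instance] Matrix.linftyOpNormedRing Matrix.linftyOpNormedAlgebra

private lemma neumann_aux (S : Type) [Fintype S] [DecidableEq S] [Nonempty S]
    (β : ℝ) (hβ0 : 0 ≤ β) (hβ1 : β < 1)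
    (M : Matrix S S ℝ) (hM0 : ∀ i j, 0 ≤ M i j) (hM1 : ∀ i, ∑ j, M i j = 1) :
    ∃ N : Matrix S S ℝ, (∀ i j, 0 ≤ N i j) ∧ N * (1 - β • M) = 1 := by
  set t : Matrix S S ℝ := β • M with ht
  have hnorm : ‖t‖ < 1 := by
    have hdef := Matrix.linfty_opNorm_def t
    have hkey : ∀ i, (∑ j, ‖t i j‖₊ : NNReal) = ‖β‖₊ := by
      intro i
      apply NNReal.coe_injective
      push_cast [coe_nnnorm]
      simp only [ht, Matrix.smul_apply, smul_eq_mul, Real.norm_eq_abs, abs_mul,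
        abs_of_nonneg (hM0 i _)]
      rw [← Finset.mul_sum, hM1 i, mul_one]
    rw [hdef]
    have : ((Finset.univ : Finset S).sup fun i => ∑ j, ‖t i j‖₊) = ‖β‖₊ := by
      rw [Finset.sup_congr rfl (fun i _ => hkey i)]
      exact Finset.sup_const Finset.univ_nonempty _
    rw [this]
    simpa [Real.norm_eq_abs, abs_of_nonneg hβ0] using hβ1
  refine ⟨∑' n, t ^ n, ?_, geom_series_mul_neg t hnorm⟩
  intro i j
  have hpow : ∀ (n : ℕ) (i j : S), 0 ≤ (t ^ n) i j := by
    intro n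
    induction n with
    | zero => intro i j; simp [Matrix.one_apply]; positivity
    | succ n ih =>
      intro i j
      rw [pow_succ, Matrix.mul_apply]
      exact Finset.sum_nonneg fun k _ => mul_nonneg (ih i k)
        (smul_nonneg hβ0 (hM0 k j))
  have hsum : HasSum (fun n => t ^ n) (∑' n, t ^ n) :=
    (summable_geometric_of_norm_lt_one hnorm).hasSum
  let e : Matrix S S ℝ →ₗ[ℝ] ℝ :=
    { toFun := fun m => m i j
      map_add' := fun x y => rfl
      map_smul' := fun c x => rfl }
  have he : Continuous e := e.continuous_of_finiteDimensional
  have h2 : HasSum (fun n => (t ^ n) i j) (e (∑' n, t ^ n)) :=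
    hsum.map e.toAddMonoidHom he
  have : e (∑' n, t ^ n) = (∑' n, t ^ n) i j := rfl
  rw [this] at h2
  rw [← h2.tsum_eq]
  exact tsum_nonneg fun n => hpow n i j

theorem Qbeta_nonempty_compact_convex_in_simplex
    (S A : Type) [Fintype S] [DecidableEq S] [Fintype A] [Nonempty S] [Nonempty A]
    (β : ℝ) (hβ0 : 0 ≤ β) (hβ1 : β < 1)
    (γ : S → ℝ) (hγ0 : ∀ s, 0 ≤ γ s) (hγ1 : ∑ s, γ s = 1)
    (p : S → A → S → ℝ)
    (hp0 : ∀ s a s', 0 ≤ p s a s')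
    (hp1 : ∀ s a, ∑ s', p s a s' = 1) :
    let Q : Set (S → A → ℝ) := { x | (∀ s a, 0 ≤ x s a) ∧
      ∀ s', ∑ s, ∑ a,
        ((if s = s' then (1 : ℝ) else 0) - β * p s a s') * x s a
          = (1 - β) * γ s' }
    Q.Nonempty ∧ IsCompact Q ∧ Convex ℝ Q ∧
      ∀ x ∈ Q, (∀ s a, 0 ≤ x s a) ∧ ∑ s, ∑ a, x s a = 1 := by
  intro Q
  classical
  set k : ℝ := (Fintype.card A : ℝ) with hk
  have hk0 : 0 < k := by
    simp only [hk]
    exact_mod_cast Fintype.card_pos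
  -- simplex containment
  have hsimp : ∀ x ∈ Q, ∑ s, ∑ a, x s a = 1 := by
    intro x hx
    have hsum : ∑ s', ∑ s, ∑ a,
        ((if s = s' then (1 : ℝ) else 0) - β * p s a s') * x s a = 1 - β := by
      rw [Finset.sum_congr rfl fun s' _ => hx.2 s', ← Finset.mul_sum, hγ1, mul_one]
    rw [Finset.sum_comm] at hsum
    have : ∀ s, ∑ s', ∑ a, ((if s = s' then (1 : ℝ) else 0) - β * p s a s') * x s a
        = (1 - β) * ∑ a, x s a := by
      intro s
      rw [Finset.sum_comm]
      rw [Finset.mul_sum]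
      refine Finset.sum_congr rfl fun a _ => ?_
      rw [← Finset.sum_mul]
      congr 1
      rw [Finset.sum_sub_distrib]
      simp [Finset.sum_ite_eq', ← Finset.mul_sum, hp1 s a]
    rw [Finset.sum_congr rfl fun s _ => this s, ← Finset.mul_sum] at hsum
    have h1β : (1 : ℝ) - β ≠ 0 := by linarith
    have : (1 - β) * (∑ s, ∑ a, x s a) = (1 - β) * 1 := by rw [mul_one]; exact hsum
    exact mul_left_cancel₀ h1β this
  -- nonemptiness
  have hne : Q.Nonempty := by
    set M : Matrix S S ℝ := Matrix.of fun s t => (∑ a, p s a t) / k with hM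
    have hM0 : ∀ i j, 0 ≤ M i j := fun i j =>
      div_nonneg (Finset.sum_nonneg fun a _ => hp0 i a j) hk0.le
    have hM1 : ∀ i, ∑ j, M i j = 1 := by
      intro i
      simp only [hM, Matrix.of_apply]
      rw [← Finset.sum_div, Finset.sum_comm]
      rw [Finset.sum_congr rfl fun a _ => hp1 i a]
      simp [hk]
    obtain ⟨N, hN0, hNmul⟩ := neumann_aux S β hβ0 hβ1 M hM0 hM1
    set v : S → ℝ := Matrix.vecMul γ N with hv
    have hv0 : ∀ j, 0 ≤ v j := fun j =>
      Finset.sum_nonneg fun i _ => mul_nonneg (hγ0 i) (hN0 i j)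
    have hveq : ∀ j, v j - β * ∑ i, v i * M i j = γ j := by
      intro j
      have h1 : Matrix.vecMul v (1 - β • M) = γ := by
        rw [hv, Matrix.vecMul_vecMul, hNmul, Matrix.vecMul_one]
      have h2 := congrFun h1 j
      simp only [Matrix.vecMul, dotProduct, Matrix.sub_apply, Matrix.one_apply,
        Matrix.smul_apply, smul_eq_mul, mul_sub] at h2
      rw [Finset.sum_sub_distrib] at h2
      simp only [mul_ite, mul_one, mul_zero, Finset.sum_ite_eq', Finset.mem_univ,
        if_true] at h2
      rw [← h2, Finset.mul_sum]
      congr 1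
      refine Finset.sum_congr rfl fun i _ => ?_
      ring
    set c : S → ℝ := fun j => (1 - β) * v j with hc
    refine ⟨fun s _ => c s / k, fun s a => div_nonneg (mul_nonneg (by linarith) (hv0 s)) hk0.le, ?_⟩
    intro s'
    have hinner : ∀ s, ∑ a, ((if s = s' then (1 : ℝ) else 0) - β * p s a s') * (c s / k)
        = (if s = s' then (1 : ℝ) else 0) * c s - β * (c s * M s s') := by
      intro s
      simp only [sub_mul]
      rw [Finset.sum_sub_distrib]
      congr 1
      · rw [Finset.sum_const, Finset.card_univ, nsmul_eq_mul, ← hk]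
        field_simp
      · have : ∀ a, β * p s a s' * (c s / k) = (β * (c s / k)) * p s a s' := fun a => by ring
        rw [Finset.sum_congr rfl fun a _ => this a, ← Finset.mul_sum]
        simp only [hM, Matrix.of_apply]
        field_simp
    rw [Finset.sum_congr rfl fun s _ => hinner s, Finset.sum_sub_distrib]
    simp only [ite_mul, one_mul, zero_mul, Finset.sum_ite_eq', Finset.mem_univ, if_true]
    rw [← Finset.mul_sum]
    simp only [hc]
    have hpull : ∑ i, (1 - β) * v i * M i s' = (1 - β) * ∑ i, v i * M i s' := by
      rw [Finset.mul_sum]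
      exact Finset.sum_congr rfl fun i _ => by ring
    rw [hpull]
    linear_combination (1 - β) * hveq s'
  -- closedness
  have hclosed : IsClosed Q := by
    have hQeq : Q = {x : S → A → ℝ | ∀ s a, 0 ≤ x s a} ∩
        ⋂ s', {x : S → A → ℝ | ∑ s, ∑ a,
          ((if s = s' then (1 : ℝ) else 0) - β * p s a s') * x s a = (1 - β) * γ s'} := by
      ext x
      simp only [Q, Set.mem_setOf_eq, Set.mem_inter_iff, Set.mem_iInter]
    rw [hQeq]
    apply IsClosed.inter
    · have : {x : S → A → ℝ | ∀ s a, 0 ≤ x s a}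
          = ⋂ s, ⋂ a, {x : S → A → ℝ | 0 ≤ x s a} := by
        ext x; simp
      rw [this]
      exact isClosed_iInter fun s => isClosed_iInter fun a =>
        isClosed_le continuous_const ((continuous_apply a).comp (continuous_apply s))
    · refine isClosed_iInter fun s' => isClosed_eq ?_ continuous_const
      exact continuous_finset_sum _ fun s _ => continuous_finset_sum _ fun a _ =>
        continuous_const.mul ((continuous_apply a).comp (continuous_apply s))
  -- compactness
  have hcompact : IsCompact Q := by
    refine IsCompact.of_isClosed_subset
      (isCompact_Icc (a := (0 : S → A → ℝ)) (b := 1)) hclosed ?_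
    intro x hx
    rw [Set.mem_Icc]
    refine ⟨Pi.le_def.mpr fun s => Pi.le_def.mpr fun a => hx.1 s a,
      Pi.le_def.mpr fun s => Pi.le_def.mpr fun a => ?_⟩
    show x s a ≤ 1
    calc x s a ≤ ∑ a', x s a' :=
            Finset.single_le_sum (fun a' _ => hx.1 s a') (Finset.mem_univ a)
        _ ≤ ∑ s', ∑ a', x s' a' :=
            Finset.single_le_sum
              (fun s' _ => Finset.sum_nonneg fun a' _ => hx.1 s' a') (Finset.mem_univ s)
        _ = 1 := hsimp x hx
  -- convexity
  have hconv : Convex ℝ Q := by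
    intro x hx y hy a b ha hb hab
    refine ⟨fun s aa => add_nonneg (mul_nonneg ha (hx.1 s aa)) (mul_nonneg hb (hy.1 s aa)), ?_⟩
    intro s'
    have hxy : ∀ s aa, (a • x + b • y) s aa = a * x s aa + b * y s aa := fun _ _ => rfl
    have : ∀ s, ∑ aa, ((if s = s' then (1 : ℝ) else 0) - β * p s aa s') * (a • x + b • y) s aa
        = a * ∑ aa, ((if s = s' then (1 : ℝ) else 0) - β * p s aa s') * x s aa
          + b * ∑ aa, ((if s = s' then (1 : ℝ) else 0) - β * p s aa s') * y s aa := by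
      intro s
      rw [Finset.mul_sum, Finset.mul_sum, ← Finset.sum_add_distrib]
      exact Finset.sum_congr rfl fun aa _ => by rw [hxy]; ring
    rw [Finset.sum_congr rfl fun s _ => this s, Finset.sum_add_distrib,
      ← Finset.mul_sum, ← Finset.mul_sum, hx.2 s', hy.2 s']
    linear_combination (1 - β) * γ s' * hab
  exact ⟨hne, hcompact, hconv, fun x hx => ⟨hx.1, hsimp x hx⟩⟩
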